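/- Let q ≥ 1, X = Fin q ⊕ Fin q, δ the transverse pairing with δ (inl i) = inr i, and let α, β be pairings of X. Then the equality |δ∘α| + |α∘β| = b_R(β) holds if and only if both of the following hold: (a) for every i : Fin q, either β (inl i) = inr i (a horizontal wire), or there exists j ≠ i with β (inl i) = inl j and β (inr i) = inr j (a symmetrical bump); and (b) for every i : Fin q, either α (inl i) = inr i, or there exists j ≠ i with β (inl i) = inl j, β (inr i) = inr j, α (inl i) = inl j and α (inr i) = inr j (α consists of horizontal wires and a subset of the symmetrical bumps of β). -/

import Mathlib

/-- Number of cycles (orbits of the generated cyclic group, fixed points included). -/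
noncomputable def permCycles {X : Type*} (σ : Equiv.Perm X) : ℕ :=
  Nat.card (MulAction.orbitRel.Quotient (Subgroup.zpowers σ) X)

/-- The length `|σ| = card X - #σ` of a permutation. -/
noncomputable def permLength {X : Type*} (σ : Equiv.Perm X) : ℕ :=
  Nat.card X - permCycles σ

/-- A pairing of `X` is a fixed-point-free involution of `X`. -/
def IsPairing {X : Type*} (α : Equiv.Perm X) : Prop :=
  α * α = 1 ∧ ∀ x, α x ≠ x

/-- A pairing of `Fin q ⊕ Fin q` is transverse if it sends the L side to the R side. -/
def IsTransverse {q : ℕ} (τ : Equiv.Perm (Fin q ⊕ Fin q)) : Prop :=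
  ∀ i : Fin q, (τ (Sum.inl i)).isRight

/-- `b_R(β)`: the number of R-side elements paired to R-side elements (twice the
number of bumps of `β`). -/
def bR {q : ℕ} (β : Equiv.Perm (Fin q ⊕ Fin q)) : ℕ :=
  (Finset.univ.filter fun i : Fin q => (β (Sum.inr i)).isRight).card

/-- The transverse pairing `δ` with `δ (inl i) = inr i`. -/
def deltaPerm (q : ℕ) : Equiv.Perm (Fin q ⊕ Fin q) :=
  Equiv.sumComm (Fin q) (Fin q)

open Finset Equiv MulAction

section CycleCount

set_option linter.unusedSectionVars false

variable {X : Type*} [Fintype X] [DecidableEq X]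

private lemma mem_orbit_zpowers {π : Equiv.Perm X} {x y : X} :
    y ∈ orbit (Subgroup.zpowers π) x ↔ ∃ k : ℤ, (π ^ k) x = y := by
  constructor
  · rintro ⟨⟨g, hg⟩, rfl⟩
    obtain ⟨k, rfl⟩ := Subgroup.mem_zpowers_iff.mp hg
    exact ⟨k, rfl⟩
  · rintro ⟨k, hk⟩
    exact ⟨⟨π ^ k, Subgroup.zpow_mem _ (Subgroup.mem_zpowers π) k⟩, hk⟩

private lemma permCycles_le (π : Equiv.Perm X) : permCycles π ≤ Fintype.card X := by
  rw [permCycles, ← Nat.card_eq_fintype_card]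
  exact Nat.card_le_card_of_surjective _ (fun c => Quotient.inductionOn' c fun y => ⟨y, rfl⟩)

private lemma permCycles_key (π : Equiv.Perm X) :
    (π * π = 1 → 2 * permCycles π = Fintype.card X + (univ.filter fun x => π x = x).card)
    ∧ 2 * permCycles π ≤ Fintype.card X + (univ.filter fun x => π x = x).card
    ∧ (2 * permCycles π = Fintype.card X + (univ.filter fun x => π x = x).card → π * π = 1) := by
  classical
  letI : Fintype (orbitRel.Quotient (Subgroup.zpowers π) X) := Fintype.ofFinite _
  set Q := orbitRel.Quotient (Subgroup.zpowers π) X with hQ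
  have hpc : permCycles π = Fintype.card Q := by
    rw [permCycles, Nat.card_eq_fintype_card]
  set S : Finset X := univ.filter fun x => π x = x with hSdef
  set fiber : Q → Finset X := fun c => univ.filter fun x => (Quotient.mk'' x : Q) = c with hfiber
  set sfiber : Q → Finset X := fun c => S.filter fun x => (Quotient.mk'' x : Q) = c with hsfiber
  have hmemf : ∀ (c : Q) (x : X), x ∈ fiber c ↔ (Quotient.mk'' x : Q) = c := by
    intro c x; simp [hfiber]
  have hmems : ∀ (c : Q) (x : X), x ∈ sfiber c ↔ π x = x ∧ (Quotient.mk'' x : Q) = c := by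
    intro c x; simp [hsfiber, hSdef]
  have hmk : ∀ x y : X, (Quotient.mk'' x : Q) = Quotient.mk'' y ↔ ∃ k : ℤ, (π ^ k) y = x := by
    intro x y
    rw [← orbitRel.Quotient.mem_orbit, orbitRel.Quotient.orbit_mk, mem_orbit_zpowers]
  have hmkp : ∀ x : X, (Quotient.mk'' (π x) : Q) = Quotient.mk'' x := by
    intro x; rw [hmk]; exact ⟨1, by simp⟩
  have hcardX : Fintype.card X = ∑ c : Q, (fiber c).card := by
    rw [Fintype.card]
    exact Finset.card_eq_sum_card_fiberwise (fun x _ => mem_univ _)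
  have hcardS : S.card = ∑ c : Q, (sfiber c).card :=
    Finset.card_eq_sum_card_fiberwise (fun x _ => mem_univ _)
  have hlow : ∀ c : Q, 2 ≤ (fiber c).card + (sfiber c).card := by
    intro c
    induction c using Quotient.inductionOn' with
    | h y =>
      by_cases hy : π y = y
      · have h1 : y ∈ fiber (Quotient.mk'' y) := (hmemf _ _).mpr rfl
        have h2 : y ∈ sfiber (Quotient.mk'' y) := (hmems _ _).mpr ⟨hy, rfl⟩
        have := Finset.card_pos.mpr ⟨y, h1⟩
        have := Finset.card_pos.mpr ⟨y, h2⟩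
        omega
      · have hsub : ({y, π y} : Finset X) ⊆ fiber (Quotient.mk'' y) := by
          intro z hz
          rcases Finset.mem_insert.mp hz with rfl | hz
          · exact (hmemf _ _).mpr rfl
          · rw [Finset.mem_singleton] at hz; subst hz
            exact (hmemf _ _).mpr (hmkp y)
        have h2 : ({y, π y} : Finset X).card = 2 := Finset.card_pair (fun h => hy h.symm)
        have := Finset.card_le_card hsub
        omega
  constructor
  · intro hinv
    have hffx : ∀ x, π (π x) = x := by
      intro x
      have := congrArg (fun σ : Equiv.Perm X => σ x) hinv
      simpa using this
    have hexact : ∀ c : Q, (fiber c).card + (sfiber c).card = 2 := by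
      intro c
      induction c using Quotient.inductionOn' with
      | h y =>
        by_cases hy : π y = y
        · have hf : fiber (Quotient.mk'' y) = {y} := by
            ext x
            rw [hmemf, Finset.mem_singleton, hmk]
            constructor
            · rintro ⟨k, hk⟩
              rw [Equiv.Perm.zpow_apply_eq_self_of_apply_eq_self hy] at hk
              exact hk.symm
            · rintro rfl; exact ⟨0, rfl⟩
          have hs : sfiber (Quotient.mk'' y) = {y} := by
            ext x
            rw [hmems, Finset.mem_singleton]
            constructor
            · rintro ⟨hx1, hx2⟩
              have : x ∈ fiber (Quotient.mk'' y) := (hmemf _ _).mpr hx2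
              rw [hf, Finset.mem_singleton] at this; exact this
            · rintro rfl; exact ⟨hy, rfl⟩
          rw [hf, hs]; simp
        · have hf : fiber (Quotient.mk'' y) = {y, π y} := by
            ext x
            rw [hmemf, hmk]
            constructor
            · rintro ⟨k, hk⟩
              rcases Equiv.Perm.zpow_apply_eq_of_apply_apply_eq_self (hffx y) k with h | h <;>
                rw [h] at hk <;> simp [← hk]
            · intro hx
              rcases Finset.mem_insert.mp hx with rfl | hx
              · exact ⟨0, rfl⟩
              · rw [Finset.mem_singleton] at hx; subst hx; exact ⟨1, by simp⟩
          have hs : sfiber (Quotient.mk'' y) = ∅ := by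
            ext x
            simp only [Finset.notMem_empty, iff_false, hmems]
            rintro ⟨hx1, hx2⟩
            have : x ∈ fiber (Quotient.mk'' y) := (hmemf _ _).mpr hx2
            rw [hf] at this
            rcases Finset.mem_insert.mp this with rfl | hx
            · exact hy hx1
            · rw [Finset.mem_singleton] at hx; subst hx
              rw [hffx y] at hx1
              exact hy hx1.symm
          rw [hf, hs]
          rw [Finset.card_pair (fun h => hy h.symm)]
          simp
    rw [hpc, hcardX, hcardS, ← Finset.sum_add_distrib]
    rw [Finset.sum_congr rfl (fun c _ => hexact c)]
    simp [mul_comm]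
  constructor
  · rw [hpc, hcardX, hcardS, ← Finset.sum_add_distrib]
    calc 2 * Fintype.card Q = ∑ _c : Q, 2 := by simp [mul_comm]
    _ ≤ ∑ c : Q, ((fiber c).card + (sfiber c).card) := Finset.sum_le_sum (fun c _ => hlow c)
  · intro heq
    rw [hpc, hcardX, hcardS, ← Finset.sum_add_distrib] at heq
    have hall : ∀ c : Q, (fiber c).card + (sfiber c).card = 2 := by
      by_contra hcon
      push_neg at hcon
      obtain ⟨c0, hc0⟩ := hcon
      have hstrict : ∑ _c : Q, 2 < ∑ c : Q, ((fiber c).card + (sfiber c).card) :=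
        Finset.sum_lt_sum (fun c _ => hlow c)
          ⟨c0, mem_univ _, lt_of_le_of_ne (hlow c0) (fun h => hc0 h.symm)⟩
      have h2Q : ∑ _c : Q, (2:ℕ) = 2 * Fintype.card Q := by
        rw [Finset.sum_const, Finset.card_univ, smul_eq_mul, mul_comm]
      omega
    ext x
    simp only [Equiv.Perm.mul_apply, Equiv.Perm.one_apply]
    by_cases hx : π x = x
    · rw [hx, hx]
    · have hxf : x ∈ fiber (Quotient.mk'' x) := (hmemf _ _).mpr rfl
      have hpxf : π x ∈ fiber (Quotient.mk'' x) := (hmemf _ _).mpr (hmkp x)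
      have hsub : ({x, π x} : Finset X) ⊆ fiber (Quotient.mk'' x) := by
        intro z hz
        rcases Finset.mem_insert.mp hz with rfl | hz
        · exact hxf
        · rw [Finset.mem_singleton] at hz; subst hz; exact hpxf
      have h2 : ({x, π x} : Finset X).card = 2 := Finset.card_pair (fun h => hx h.symm)
      have hfc : (fiber (Quotient.mk'' x)).card ≤ 2 := by
        have := hall (Quotient.mk'' x); omega
      have hfeq : fiber (Quotient.mk'' x) = {x, π x} :=
        (Finset.eq_of_subset_of_card_le hsub (by omega)).symm
      have hp2 : π (π x) ∈ fiber (Quotient.mk'' x) := by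
        rw [hmemf, hmk]
        exact ⟨2, by rw [zpow_two]; rfl⟩
      rw [hfeq] at hp2
      rcases Finset.mem_insert.mp hp2 with h | h
      · exact h
      · rw [Finset.mem_singleton] at h
        exact absurd (π.injective h) hx

end CycleCount

section Main

variable {q : ℕ}

private lemma delta_inl (i : Fin q) : deltaPerm q (Sum.inl i) = Sum.inr i := rfl
private lemma delta_inr (i : Fin q) : deltaPerm q (Sum.inr i) = Sum.inl i := rfl
private lemma delta_delta (x : Fin q ⊕ Fin q) : deltaPerm q (deltaPerm q x) = x := by
  cases x <;> rfl

private lemma sum_sameSide (β : Equiv.Perm (Fin q ⊕ Fin q)) (hββ : ∀ x, β (β x) = x) :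
    ∑ x : Fin q ⊕ Fin q, (if (β x).isLeft = x.isLeft then 1 else 0) = 2 * bR β := by
  classical
  have hfq : (univ.filter fun y : Fin q ⊕ Fin q => y.isRight).card = q := by
    rw [card_filter, Fintype.sum_sum_type]
    simp
  have hbij : (univ.filter fun x : Fin q ⊕ Fin q => (β x).isRight).card
      = (univ.filter fun y : Fin q ⊕ Fin q => y.isRight).card := by
    apply Finset.card_bij (fun x _ => β x)
    · intro a ha
      simp only [mem_filter, mem_univ, true_and] at ha ⊢
      exact ha
    · intro a _ b _ h
      exact β.injective h
    · intro y hy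
      simp only [mem_filter, mem_univ, true_and] at hy ⊢
      exact ⟨β y, by rw [hββ]; exact hy, hββ y⟩
  have htot := hbij.trans hfq
  rw [card_filter, Fintype.sum_sum_type] at htot
  have hsplit : ∀ i : Fin q,
      (if (β (Sum.inl i)).isLeft = true then 1 else 0)
        + (if (β (Sum.inl i)).isRight then 1 else 0) = 1 := by
    intro i; cases h : β (Sum.inl i) <;> simp [h]
  have hq1 : (∑ i : Fin q, if (β (Sum.inl i)).isLeft = true then 1 else 0)
      + (∑ i : Fin q, if (β (Sum.inl i)).isRight then 1 else 0) = q := by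
    rw [← Finset.sum_add_distrib, Finset.sum_congr rfl (fun i _ => hsplit i)]
    simp
  have hbr : (∑ i : Fin q, if (β (Sum.inr i)).isRight then 1 else 0) = bR β := by
    rw [bR, card_filter]
  rw [Fintype.sum_sum_type]
  simp only [Sum.isLeft_inl, Sum.isLeft_inr]
  have h2 : (∑ i : Fin q, if (β (Sum.inr i)).isLeft = false then 1 else 0) = bR β := by
    rw [← hbr]
    apply Finset.sum_congr rfl
    intro i _
    congr 1
    simp [Sum.isLeft_eq_false]
  refine Eq.trans (b := (∑ i : Fin q, if (β (Sum.inl i)).isLeft = true then 1 else 0)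
    + ∑ i : Fin q, if (β (Sum.inr i)).isLeft = false then 1 else 0) rfl ?_
  rw [h2]
  omega

/-- "Exactly two of the three hold" condition at a point. -/
private def Tri (α β : Equiv.Perm (Fin q ⊕ Fin q)) (x : Fin q ⊕ Fin q) : Prop :=
  (α x = deltaPerm q x ∧ β x = α x ∧ ¬((β x).isLeft = x.isLeft)) ∨
  (α x = deltaPerm q x ∧ ¬(β x = α x) ∧ (β x).isLeft = x.isLeft) ∨
  (¬(α x = deltaPerm q x) ∧ β x = α x ∧ (β x).isLeft = x.isLeft)

/-- Joint structure at index `i`. -/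
private def JointP (α β : Equiv.Perm (Fin q ⊕ Fin q)) (i : Fin q) : Prop :=
  (β (Sum.inl i) = Sum.inr i ∧ α (Sum.inl i) = Sum.inr i) ∨
  (∃ j, j ≠ i ∧ β (Sum.inl i) = Sum.inl j ∧ β (Sum.inr i) = Sum.inr j ∧
    α (Sum.inl i) = Sum.inr i) ∨
  (∃ j, j ≠ i ∧ β (Sum.inl i) = Sum.inl j ∧ β (Sum.inr i) = Sum.inr j ∧
    α (Sum.inl i) = Sum.inl j ∧ α (Sum.inr i) = Sum.inr j)

private lemma struct_of_eq {α β : Equiv.Perm (Fin q ⊕ Fin q)}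
    (hαα : ∀ x, α (α x) = x) (hββ : ∀ x, β (β x) = x) (hβfix : ∀ x, β x ≠ x)
    (H1 : ∀ x, deltaPerm q (α (deltaPerm q (α x))) = x)
    (H2 : ∀ x, α (β (α (β x))) = x)
    (Hpt : ∀ x, Tri α β x) : ∀ i, JointP α β i := by
  intro i
  cases hb : β (Sum.inl i) with
  | inr j =>
    rcases Hpt (Sum.inl i) with ⟨h1, h2, h3⟩ | ⟨h1, h2, h3⟩ | ⟨h1, h2, h3⟩
    · have hαLi : α (Sum.inl i) = Sum.inr i := by rw [h1, delta_inl]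
      have hji : (Sum.inr j : Fin q ⊕ Fin q) = Sum.inr i := by rw [← hb, h2, hαLi]
      obtain rfl : j = i := by injection hji
      exact Or.inl ⟨hb, hαLi⟩
    · rw [hb] at h3; simp at h3
    · rw [hb] at h3; simp at h3
  | inl j =>
    have hne : j ≠ i := by rintro rfl; exact hβfix _ hb
    have hβLj : β (Sum.inl j) = Sum.inl i := by rw [← hb, hββ]
    rcases Hpt (Sum.inl i) with ⟨h1, h2, h3⟩ | ⟨h1, h2, h3⟩ | ⟨h1, h2, h3⟩
    · rw [hb] at h3; simp at h3
    · -- α (L i) = R i; show the bump of β is symmetric and take middle disjunct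
      have hαLi : α (Sum.inl i) = Sum.inr i := by rw [h1, delta_inl]
      have hαLj : α (Sum.inl j) = Sum.inr j := by
        rcases Hpt (Sum.inl j) with ⟨g1, g2, g3⟩ | ⟨g1, g2, g3⟩ | ⟨g1, g2, g3⟩
        · rw [hβLj] at g3; simp at g3
        · rw [g1, delta_inl]
        · exfalso
          have e1 : α (Sum.inl j) = Sum.inl i := by rw [← g2, hβLj]
          have e2 : α (Sum.inl i) = Sum.inl j := by rw [← e1, hαα]
          rw [hαLi] at e2
          exact nomatch e2
      have h5 := H2 (Sum.inl i)
      rw [hb, hαLj] at h5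
      have h6 : β (Sum.inr j) = α (Sum.inl i) := by rw [← h5, hαα]
      rw [hαLi] at h6
      have h7 : β (Sum.inr i) = Sum.inr j := by rw [← h6, hββ]
      exact Or.inr (Or.inl ⟨j, hne, hb, h7, hαLi⟩)
    · -- β (L i) = α (L i) = L j
      have hαLi : α (Sum.inl i) = Sum.inl j := by rw [← h2, hb]
      have h5 := H1 (Sum.inl i)
      rw [hαLi, delta_inl] at h5
      have h6 : α (Sum.inr j) = deltaPerm q (Sum.inl i) := by
        have := congrArg (deltaPerm q) h5
        rw [delta_delta] at this
        exact this
      rw [delta_inl] at h6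
      have hαRi : α (Sum.inr i) = Sum.inr j := by rw [← h6, hαα]
      cases hbr : β (Sum.inr i) with
      | inl k =>
        rcases Hpt (Sum.inr i) with ⟨g1, g2, g3⟩ | ⟨g1, g2, g3⟩ | ⟨g1, g2, g3⟩
        · exfalso; rw [hαRi, delta_inr] at g1; exact nomatch g1
        · exfalso; rw [hαRi, delta_inr] at g1; exact nomatch g1
        · rw [hbr] at g3; simp at g3
      | inr k =>
        rcases Hpt (Sum.inr i) with ⟨g1, g2, g3⟩ | ⟨g1, g2, g3⟩ | ⟨g1, g2, g3⟩
        · rw [hbr] at g3; simp at g3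
        · exfalso; rw [hαRi, delta_inr] at g1; exact nomatch g1
        · have hc : β (Sum.inr i) = Sum.inr j := by rw [g2, hαRi]
          exact Or.inr (Or.inr ⟨j, hne, hb, hc, hαLi, hαRi⟩)

private lemma tri_of_joint {α β : Equiv.Perm (Fin q ⊕ Fin q)}
    (hαα : ∀ x, α (α x) = x) (hββ : ∀ x, β (β x) = x)
    (HJ : ∀ i, JointP α β i) : ∀ x, Tri α β x := by
  intro x
  cases x with
  | inl i =>
    rcases HJ i with ⟨hb, ha⟩ | ⟨j, hne, hb1, hb2, ha⟩ | ⟨j, hne, hb1, hb2, ha1, ha2⟩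
    · exact Or.inl ⟨by rw [ha, delta_inl], by rw [hb, ha], by rw [hb]; simp⟩
    · refine Or.inr (Or.inl ⟨by rw [ha, delta_inl], ?_, by rw [hb1]; simp⟩)
      rw [hb1, ha]; simp
    · refine Or.inr (Or.inr ⟨?_, by rw [hb1, ha1], by rw [hb1]; simp⟩)
      rw [ha1, delta_inl]; simp
  | inr i =>
    rcases HJ i with ⟨hb, ha⟩ | ⟨j, hne, hb1, hb2, ha⟩ | ⟨j, hne, hb1, hb2, ha1, ha2⟩
    · have haR : α (Sum.inr i) = Sum.inl i := by rw [← ha, hαα]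
      have hbR : β (Sum.inr i) = Sum.inl i := by rw [← hb, hββ]
      exact Or.inl ⟨by rw [haR, delta_inr], by rw [hbR, haR], by rw [hbR]; simp⟩
    · have haR : α (Sum.inr i) = Sum.inl i := by rw [← ha, hαα]
      refine Or.inr (Or.inl ⟨by rw [haR, delta_inr], ?_, by rw [hb2]; simp⟩)
      rw [hb2, haR]; simp
    · refine Or.inr (Or.inr ⟨?_, by rw [hb2, ha2], by rw [hb2]; simp⟩)
      rw [ha2, delta_inr]; simp

private lemma inv1_of_joint {α β : Equiv.Perm (Fin q ⊕ Fin q)}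
    (hαα : ∀ x, α (α x) = x)
    (HJ : ∀ i, JointP α β i) :
    ∀ x, deltaPerm q (α (deltaPerm q (α x))) = x := by
  intro x
  cases x with
  | inl i =>
    rcases HJ i with ⟨hb, ha⟩ | ⟨j, hne, hb1, hb2, ha⟩ | ⟨j, hne, hb1, hb2, ha1, ha2⟩
    · have haR : α (Sum.inr i) = Sum.inl i := by rw [← ha, hαα]
      rw [ha, delta_inr, ha, delta_inr]
    · have haR : α (Sum.inr i) = Sum.inl i := by rw [← ha, hαα]
      rw [ha, delta_inr, ha, delta_inr]
    · have hαRj : α (Sum.inr j) = Sum.inr i := by rw [← ha2, hαα]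
      rw [ha1, delta_inl, hαRj, delta_inr]
  | inr i =>
    rcases HJ i with ⟨hb, ha⟩ | ⟨j, hne, hb1, hb2, ha⟩ | ⟨j, hne, hb1, hb2, ha1, ha2⟩
    · have haR : α (Sum.inr i) = Sum.inl i := by rw [← ha, hαα]
      rw [haR, delta_inl, haR, delta_inl]
    · have haR : α (Sum.inr i) = Sum.inl i := by rw [← ha, hαα]
      rw [haR, delta_inl, haR, delta_inl]
    · have hαLj : α (Sum.inl j) = Sum.inl i := by rw [← ha1, hαα]
      rw [ha2, delta_inr, hαLj, delta_inl]

private lemma inv2_of_joint {α β : Equiv.Perm (Fin q ⊕ Fin q)}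
    (hαα : ∀ x, α (α x) = x) (hββ : ∀ x, β (β x) = x)
    (HJ : ∀ i, JointP α β i) :
    ∀ x, α (β (α (β x))) = x := by
  intro x
  cases x with
  | inl i =>
    rcases HJ i with ⟨hb, ha⟩ | ⟨j, hne, hb1, hb2, ha⟩ | ⟨j, hne, hb1, hb2, ha1, ha2⟩
    · have haR : α (Sum.inr i) = Sum.inl i := by rw [← ha, hαα]
      rw [hb, haR, hb, haR]
    · -- β has a symmetric bump {i,j}, α is horizontal at i; need α horizontal at j
      have hβLj : β (Sum.inl j) = Sum.inl i := by rw [← hb1, hββ]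
      have hαLj : α (Sum.inl j) = Sum.inr j := by
        rcases HJ j with ⟨gb, ga⟩ | ⟨k, gne, gb1, gb2, ga⟩ | ⟨k, gne, gb1, gb2, ga1, ga2⟩
        · rw [hβLj] at gb; exact nomatch gb
        · exact ga
        · exfalso
          rw [hβLj] at gb1
          injection gb1 with hik
          subst hik
          have : α (Sum.inl i) = Sum.inl j := by rw [← ga1, hαα]
          rw [ha] at this
          exact nomatch this
      have hbRj : β (Sum.inr j) = Sum.inr i := by rw [← hb2, hββ]
      have haR : α (Sum.inr i) = Sum.inl i := by rw [← ha, hαα]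
      rw [hb1, hαLj, hbRj, haR]
    · have hαLj : α (Sum.inl j) = Sum.inl i := by rw [← ha1, hαα]
      rw [hb1, hαLj, hb1, hαLj]
  | inr i =>
    rcases HJ i with ⟨hb, ha⟩ | ⟨j, hne, hb1, hb2, ha⟩ | ⟨j, hne, hb1, hb2, ha1, ha2⟩
    · have haR : α (Sum.inr i) = Sum.inl i := by rw [← ha, hαα]
      have hbR : β (Sum.inr i) = Sum.inl i := by rw [← hb, hββ]
      rw [hbR, ha, hbR, ha]
    · have hβLj : β (Sum.inl j) = Sum.inl i := by rw [← hb1, hββ]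
      have hαLj : α (Sum.inl j) = Sum.inr j := by
        rcases HJ j with ⟨gb, ga⟩ | ⟨k, gne, gb1, gb2, ga⟩ | ⟨k, gne, gb1, gb2, ga1, ga2⟩
        · rw [hβLj] at gb; exact nomatch gb
        · exact ga
        · exfalso
          rw [hβLj] at gb1
          injection gb1 with hik
          subst hik
          have : α (Sum.inl i) = Sum.inl j := by rw [← ga1, hαα]
          rw [ha] at this
          exact nomatch this
      have hαRj : α (Sum.inr j) = Sum.inl j := by rw [← hαLj, hαα]
      rw [hb2, hαRj, hβLj, ha]
    · have hαRj : α (Sum.inr j) = Sum.inr i := by rw [← ha2, hαα]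
      rw [hb2, hαRj, hb2, hαRj]

theorem stmt11 (q : ℕ) (hq : 1 ≤ q) (α β : Equiv.Perm (Fin q ⊕ Fin q))
    (hα : IsPairing α) (hβ : IsPairing β) :
    permLength (deltaPerm q * α) + permLength (α * β) = bR β ↔
      ((∀ i : Fin q, β (Sum.inl i) = Sum.inr i ∨
         ∃ j : Fin q, j ≠ i ∧ β (Sum.inl i) = Sum.inl j ∧ β (Sum.inr i) = Sum.inr j) ∧
       (∀ i : Fin q, α (Sum.inl i) = Sum.inr i ∨
         ∃ j : Fin q, j ≠ i ∧ β (Sum.inl i) = Sum.inl j ∧ β (Sum.inr i) = Sum.inr j ∧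
           α (Sum.inl i) = Sum.inl j ∧ α (Sum.inr i) = Sum.inr j)) := by
  obtain ⟨hα1, hαfix⟩ := hα
  obtain ⟨hβ1, hβfix⟩ := hβ
  have hαα : ∀ x, α (α x) = x := fun x => by
    have := congrArg (fun σ : Equiv.Perm (Fin q ⊕ Fin q) => σ x) hα1; simpa using this
  have hββ : ∀ x, β (β x) = x := fun x => by
    have := congrArg (fun σ : Equiv.Perm (Fin q ⊕ Fin q) => σ x) hβ1; simpa using this
  -- fixed-point filters
  have hfil1 : (univ.filter fun x => (deltaPerm q * α) x = x)
      = (univ.filter fun x : Fin q ⊕ Fin q => α x = deltaPerm q x) := by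
    apply Finset.filter_congr
    intro x _
    simp only [Equiv.Perm.mul_apply]
    constructor
    · intro h
      have h' := congrArg (deltaPerm q) h
      rwa [delta_delta] at h'
    · intro h; rw [h, delta_delta]
  have hfil2 : (univ.filter fun x => (α * β) x = x)
      = (univ.filter fun x : Fin q ⊕ Fin q => β x = α x) := by
    apply Finset.filter_congr
    intro x _
    simp only [Equiv.Perm.mul_apply]
    constructor
    · intro h
      have h' := congrArg α h
      rwa [hαα] at h'
    · intro h; rw [h, hαα]
  have hcard1 : (univ.filter fun x => (deltaPerm q * α) x = x).card
      = ∑ x : Fin q ⊕ Fin q, (if α x = deltaPerm q x then 1 else 0) := by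
    rw [hfil1, card_filter]
  have hcard2 : (univ.filter fun x => (α * β) x = x).card
      = ∑ x : Fin q ⊕ Fin q, (if β x = α x then 1 else 0) := by
    rw [hfil2, card_filter]
  have key1 := permCycles_key (deltaPerm q * α)
  have key2 := permCycles_key (α * β)
  rw [hcard1] at key1
  rw [hcard2] at key2
  have hc1le : permCycles (deltaPerm q * α) ≤ Fintype.card (Fin q ⊕ Fin q) := permCycles_le _
  have hc2le : permCycles (α * β) ≤ Fintype.card (Fin q ⊕ Fin q) := permCycles_le _
  have hlen1 : permLength (deltaPerm q * α)
      = Fintype.card (Fin q ⊕ Fin q) - permCycles (deltaPerm q * α) := by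
    rw [permLength, Nat.card_eq_fintype_card]
  have hlen2 : permLength (α * β)
      = Fintype.card (Fin q ⊕ Fin q) - permCycles (α * β) := by
    rw [permLength, Nat.card_eq_fintype_card]
  have hs3 : ∑ x : Fin q ⊕ Fin q, (if (β x).isLeft = x.isLeft then 1 else 0) = 2 * bR β :=
    sum_sameSide β hββ
  set F1 := ∑ x : Fin q ⊕ Fin q, (if α x = deltaPerm q x then 1 else 0) with hF1
  set F2 := ∑ x : Fin q ⊕ Fin q, (if β x = α x then 1 else 0) with hF2
  set F3 := ∑ x : Fin q ⊕ Fin q, (if (β x).isLeft = x.isLeft then 1 else 0) with hF3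
  -- not all three conditions can hold at a point
  have hd : ∀ x : Fin q ⊕ Fin q,
      ¬(α x = deltaPerm q x ∧ β x = α x ∧ (β x).isLeft = x.isLeft) := by
    rintro x ⟨h1, h2, h3⟩
    rw [h2, h1] at h3
    cases x <;> simp [delta_inl, delta_inr] at h3
  have hptle : ∀ x : Fin q ⊕ Fin q,
      (if α x = deltaPerm q x then 1 else 0) + (if β x = α x then 1 else 0)
        + (if (β x).isLeft = x.isLeft then 1 else 0) ≤ 2 := by
    intro x
    split_ifs with h1 h2 h3 <;> try omega
    exact absurd ⟨h1, h2, h3⟩ (hd x)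
  have hconst : ∑ _x : Fin q ⊕ Fin q, (2:ℕ) = 2 * Fintype.card (Fin q ⊕ Fin q) := by
    rw [Finset.sum_const, Finset.card_univ, smul_eq_mul, mul_comm]
  have hsum_expand : ∑ x : Fin q ⊕ Fin q, ((if α x = deltaPerm q x then 1 else 0)
      + (if β x = α x then 1 else 0) + (if (β x).isLeft = x.isLeft then 1 else 0))
      = F1 + F2 + F3 := by
    rw [hF1, hF2, hF3, ← Finset.sum_add_distrib, ← Finset.sum_add_distrib]
  have hsum_le : F1 + F2 + F3 ≤ 2 * Fintype.card (Fin q ⊕ Fin q) := by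
    rw [← hsum_expand, ← hconst]
    exact Finset.sum_le_sum (fun x _ => hptle x)
  constructor
  · intro h
    rw [hlen1, hlen2] at h
    have k1 := key1.2.1
    have k2 := key2.2.1
    have e1 : 2 * permCycles (deltaPerm q * α) = Fintype.card (Fin q ⊕ Fin q) + F1 := by
      omega
    have e2 : 2 * permCycles (α * β) = Fintype.card (Fin q ⊕ Fin q) + F2 := by
      omega
    have e3 : F1 + F2 + F3 = 2 * Fintype.card (Fin q ⊕ Fin q) := by
      omega
    have Hinv1 := key1.2.2 e1
    have Hinv2 := key2.2.2 e2
    have H1 : ∀ x, deltaPerm q (α (deltaPerm q (α x))) = x := fun x => by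
      have := congrArg (fun σ : Equiv.Perm (Fin q ⊕ Fin q) => σ x) Hinv1
      simpa using this
    have H2 : ∀ x, α (β (α (β x))) = x := fun x => by
      have := congrArg (fun σ : Equiv.Perm (Fin q ⊕ Fin q) => σ x) Hinv2
      simpa using this
    have Hpt2 : ∀ x : Fin q ⊕ Fin q,
        (if α x = deltaPerm q x then 1 else 0) + (if β x = α x then 1 else 0)
          + (if (β x).isLeft = x.isLeft then 1 else 0) = 2 := by
      by_contra hcon
      push_neg at hcon
      obtain ⟨x0, hx0⟩ := hcon
      have hlt : ∑ x : Fin q ⊕ Fin q, ((if α x = deltaPerm q x then 1 else 0)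
          + (if β x = α x then 1 else 0) + (if (β x).isLeft = x.isLeft then 1 else 0))
          < ∑ _x : Fin q ⊕ Fin q, 2 :=
        Finset.sum_lt_sum (fun x _ => hptle x)
          ⟨x0, mem_univ _, lt_of_le_of_ne (hptle x0) hx0⟩
      rw [hsum_expand, hconst] at hlt
      omega
    have htri : ∀ x, Tri α β x := by
      intro x
      have hx := Hpt2 x
      by_cases h1 : α x = deltaPerm q x <;> by_cases h2 : β x = α x <;>
        by_cases h3 : (β x).isLeft = x.isLeft
      · exact absurd ⟨h1, h2, h3⟩ (hd x)
      · exact Or.inl ⟨h1, h2, h3⟩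
      · exact Or.inr (Or.inl ⟨h1, h2, h3⟩)
      · rw [if_pos h1, if_neg h2, if_neg h3] at hx; omega
      · exact Or.inr (Or.inr ⟨h1, h2, h3⟩)
      · rw [if_neg h1, if_pos h2, if_neg h3] at hx; omega
      · rw [if_neg h1, if_neg h2, if_pos h3] at hx; omega
      · rw [if_neg h1, if_neg h2, if_neg h3] at hx; omega
    have HJ := struct_of_eq hαα hββ hβfix H1 H2 htri
    constructor
    · intro i
      rcases HJ i with ⟨hb, _⟩ | ⟨j, hne, hb1, hb2, _⟩ | ⟨j, hne, hb1, hb2, _, _⟩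
      · exact Or.inl hb
      · exact Or.inr ⟨j, hne, hb1, hb2⟩
      · exact Or.inr ⟨j, hne, hb1, hb2⟩
    · intro i
      rcases HJ i with ⟨_, ha⟩ | ⟨j, hne, hb1, hb2, ha⟩ | ⟨j, hne, hb1, hb2, ha1, ha2⟩
      · exact Or.inl ha
      · exact Or.inl ha
      · exact Or.inr ⟨j, hne, hb1, hb2, ha1, ha2⟩
  · rintro ⟨hA, hB⟩
    have HJ : ∀ i, JointP α β i := by
      intro i
      rcases hB i with ha | ⟨j, hne, hb1, hb2, ha1, ha2⟩
      · rcases hA i with hb | ⟨j, hne, hb1, hb2⟩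
        · exact Or.inl ⟨hb, ha⟩
        · exact Or.inr (Or.inl ⟨j, hne, hb1, hb2, ha⟩)
      · exact Or.inr (Or.inr ⟨j, hne, hb1, hb2, ha1, ha2⟩)
    have htri := tri_of_joint hαα hββ HJ
    have H1 := inv1_of_joint hαα HJ
    have H2 := inv2_of_joint hαα hββ HJ
    have Hinv1 : (deltaPerm q * α) * (deltaPerm q * α) = 1 := by
      ext x; simpa using H1 x
    have Hinv2 : (α * β) * (α * β) = 1 := by
      ext x; simpa using H2 x
    have e1 := key1.1 Hinv1
    have e2 := key2.1 Hinv2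
    have Hpt2 : ∀ x : Fin q ⊕ Fin q,
        (if α x = deltaPerm q x then 1 else 0) + (if β x = α x then 1 else 0)
          + (if (β x).isLeft = x.isLeft then 1 else 0) = 2 := by
      intro x
      rcases htri x with ⟨h1, h2, h3⟩ | ⟨h1, h2, h3⟩ | ⟨h1, h2, h3⟩
      · rw [if_pos h1, if_pos h2, if_neg h3]
      · rw [if_pos h1, if_neg h2, if_pos h3]
      · rw [if_neg h1, if_pos h2, if_pos h3]
    have e3 : F1 + F2 + F3 = 2 * Fintype.card (Fin q ⊕ Fin q) := by
      rw [← hsum_expand, Finset.sum_congr rfl (fun x _ => Hpt2 x), hconst]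
    rw [hlen1, hlen2]
    omega

end Main
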